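/- For any natural number r ≥ 1, any positive reals R, Q, and any positive integer n, the following four-term partition holds: Λ_r(n) = ∑_{d | n, d ≤ R} μ(d)(log(n/d))^r − ∑_{lm | n, m ≤ R, l ≤ Q} μ(m)Λ_r(l) + ∑_{lm | n, l ≤ Q} μ(m)Λ_r(l) + ∑_{lm | n, m > R, l > Q} μ(m)Λ_r(l), where in the double sums l, m range over pairs of positive integers with lm dividing n. -/

import Mathlib

/-- Generalized von Mangoldt function of order `r`:
`Λ_r(n) = ∑_{d ∣ n} μ(d) (log(n/d))^r`. -/
noncomputable def genVonMangoldt (r : ℕ) (n : ℕ) : ℝ :=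
  ∑ d ∈ n.divisors, (ArithmeticFunction.moebius d : ℝ) * (Real.log ((n / d : ℕ) : ℝ)) ^ r

open ArithmeticFunction in
lemma sum_genVonMangoldt (r : ℕ) (n : ℕ) (hn : 0 < n) :
    ∑ d ∈ n.divisors, genVonMangoldt r d = (Real.log n) ^ r := by
  have := (ArithmeticFunction.sum_eq_iff_sum_mul_moebius_eq
    (R := ℝ) (f := genVonMangoldt r) (g := fun n => (Real.log n) ^ r)).2 ?_ n hn
  · exact this
  · intro m hm
    rw [Nat.sum_divisorsAntidiagonal (fun a b => (moebius a : ℝ) * (Real.log b) ^ r)]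
    rfl

open Finset in
lemma double_sum_reindex (n : ℕ) (hn : 0 < n) (p : ℕ → Prop) [DecidablePred p]
    (F : ℕ → ℕ → ℝ) :
    ∑ q ∈ (n.divisors ×ˢ n.divisors).filter (fun q => q.1 * q.2 ∣ n ∧ p q.2), F q.1 q.2
      = ∑ m ∈ n.divisors.filter p, ∑ l ∈ (n / m).divisors, F l m := by
  rw [Finset.sum_filter, Finset.sum_product_right, Finset.sum_filter]
  refine Finset.sum_congr rfl fun m hm => ?_
  have hmd : m ∣ n := Nat.dvd_of_mem_divisors hm
  have hnm : n / m ≠ 0 := Nat.div_ne_zero_iff.2 ⟨(Nat.pos_of_mem_divisors hm).ne',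
    Nat.le_of_dvd hn hmd⟩
  by_cases hp : p m
  · simp only [hp, and_true, if_true]
    rw [← Finset.sum_filter]
    refine Finset.sum_congr ?_ (fun _ _ => rfl)
    ext l
    simp only [Finset.mem_filter, Nat.mem_divisors, hn.ne', ne_eq, not_false_eq_true, and_true,
      hnm]
    constructor
    · rintro ⟨-, h⟩
      exact (Nat.dvd_div_iff_mul_dvd hmd).2 (by rwa [mul_comm])
    · intro h
      have h' : m * l ∣ n := (Nat.dvd_div_iff_mul_dvd hmd).1 h
      exact ⟨dvd_trans ⟨m, rfl⟩ (by rwa [mul_comm] at h'), by rwa [mul_comm]⟩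
  · simp only [hp, and_false, if_false, Finset.sum_const_zero]

open ArithmeticFunction in
theorem genVonMangoldt_four_term_partition (r : ℕ) (hr : 1 ≤ r) (R Q : ℝ)
    (hR : 0 < R) (hQ : 0 < Q) (n : ℕ) (hn : 0 < n) :
    genVonMangoldt r n =
      (∑ d ∈ n.divisors.filter (fun d : ℕ => (d : ℝ) ≤ R),
          (ArithmeticFunction.moebius d : ℝ) * (Real.log ((n / d : ℕ) : ℝ)) ^ r)
      - (∑ q ∈ (n.divisors ×ˢ n.divisors).filter
            (fun q => q.1 * q.2 ∣ n ∧ (q.2 : ℝ) ≤ R ∧ (q.1 : ℝ) ≤ Q),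
          (ArithmeticFunction.moebius q.2 : ℝ) * genVonMangoldt r q.1)
      + (∑ q ∈ (n.divisors ×ˢ n.divisors).filter
            (fun q => q.1 * q.2 ∣ n ∧ (q.1 : ℝ) ≤ Q),
          (ArithmeticFunction.moebius q.2 : ℝ) * genVonMangoldt r q.1)
      + (∑ q ∈ (n.divisors ×ˢ n.divisors).filter
            (fun q => q.1 * q.2 ∣ n ∧ R < (q.2 : ℝ) ∧ Q < (q.1 : ℝ)),
          (ArithmeticFunction.moebius q.2 : ℝ) * genVonMangoldt r q.1) := by
  classical
  set f : ℕ × ℕ → ℝ := fun q => (moebius q.2 : ℝ) * genVonMangoldt r q.1 with hf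
  -- E : the sum over pairs with R < m
  have hE : (∑ q ∈ (n.divisors ×ˢ n.divisors).filter
        (fun q => q.1 * q.2 ∣ n ∧ R < (q.2 : ℝ)), f q)
      = ∑ d ∈ n.divisors.filter (fun d : ℕ => R < (d : ℝ)),
          (moebius d : ℝ) * (Real.log ((n / d : ℕ) : ℝ)) ^ r := by
    rw [double_sum_reindex n hn (fun m => R < (m : ℝ))
      (fun l m => (moebius m : ℝ) * genVonMangoldt r l)]
    refine Finset.sum_congr rfl fun m hm => ?_
    have hm' := Finset.mem_filter.1 hm
    have hmd : m ∣ n := Nat.dvd_of_mem_divisors hm'.1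
    have hnm : 0 < n / m := Nat.div_pos (Nat.le_of_dvd hn hmd) (Nat.pos_of_mem_divisors hm'.1)
    rw [← Finset.mul_sum, sum_genVonMangoldt r _ hnm]
  -- exchange identity : E + B = C + D
  have key : (∑ q ∈ (n.divisors ×ˢ n.divisors).filter
        (fun q => q.1 * q.2 ∣ n ∧ R < (q.2 : ℝ)), f q)
      + (∑ q ∈ (n.divisors ×ˢ n.divisors).filter
          (fun q => q.1 * q.2 ∣ n ∧ (q.2 : ℝ) ≤ R ∧ (q.1 : ℝ) ≤ Q), f q)
      = (∑ q ∈ (n.divisors ×ˢ n.divisors).filter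
          (fun q => q.1 * q.2 ∣ n ∧ (q.1 : ℝ) ≤ Q), f q)
      + (∑ q ∈ (n.divisors ×ˢ n.divisors).filter
          (fun q => q.1 * q.2 ∣ n ∧ R < (q.2 : ℝ) ∧ Q < (q.1 : ℝ)), f q) := by
    simp only [Finset.sum_filter, ← Finset.sum_add_distrib]
    refine Finset.sum_congr rfl fun q _ => ?_
    by_cases hP : q.1 * q.2 ∣ n
    · by_cases h1 : (q.2 : ℝ) ≤ R
      · by_cases h2 : (q.1 : ℝ) ≤ Q
        · simp [hP, h1, h2, not_lt.2 h1]
        · simp [hP, h1, h2, not_lt.2 h1]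
      · by_cases h2 : (q.1 : ℝ) ≤ Q
        · simp [hP, h1, h2, not_le.1 h1]
        · simp [hP, h1, h2, not_le.1 h1, not_le.1 h2]
    · simp [hP]
  -- split Λ_r(n)
  have hsplit : genVonMangoldt r n =
      (∑ d ∈ n.divisors.filter (fun d : ℕ => (d : ℝ) ≤ R),
          (moebius d : ℝ) * (Real.log ((n / d : ℕ) : ℝ)) ^ r)
      + ∑ d ∈ n.divisors.filter (fun d : ℕ => R < (d : ℝ)),
          (moebius d : ℝ) * (Real.log ((n / d : ℕ) : ℝ)) ^ r := by
    rw [genVonMangoldt,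
      ← Finset.sum_filter_add_sum_filter_not n.divisors (fun d : ℕ => (d : ℝ) ≤ R)]
    congr 1
    refine Finset.sum_congr (Finset.filter_congr fun d _ => ?_) fun _ _ => rfl
    simp [not_le]
  rw [hsplit, ← hE]
  linarith [key]
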